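/- Under the same hypotheses (v = dm odd, a_i, b_i ∈ {-1,1}, PSD_A(s)+PSD_B(s) = 2v-2 for s = 1,...,v-1 and = 4v-2 for s = 0), one has Σ_{0≤k<l<d} (A_k A_l + B_k B_l) = v - m. -/

import Mathlib

noncomputable def PSD (v : ℕ) (x : ℕ → ℝ) (k : ℕ) : ℝ :=
  ‖∑ α ∈ Finset.range v, (x α : ℂ)
    * Complex.exp (2 * (Real.pi : ℂ) * Complex.I * α * k / v)‖ ^ 2

open Finset Complex

private lemma orth' (d : ℕ) (j : ℤ) (hj : j ≠ 0) (hjd : j.natAbs < d) :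
    ∑ s ∈ range d, Complex.exp (2 * (Real.pi:ℂ) * Complex.I * j * s / d) = 0 := by
  have hd : 0 < d := lt_of_le_of_lt (Nat.zero_le _) hjd
  have hdC : (d:ℂ) ≠ 0 := Nat.cast_ne_zero.mpr hd.ne'
  set z : ℂ := Complex.exp (2 * (Real.pi:ℂ) * Complex.I * j / d) with hz
  have hrw : ∀ s : ℕ, Complex.exp (2 * (Real.pi:ℂ) * Complex.I * j * s / d) = z ^ s := by
    intro s
    rw [hz, ← Complex.exp_nat_mul]
    ring_nf
  have h2 : (2 * (Real.pi:ℂ) * Complex.I) ≠ 0 := by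
    simp [Real.pi_ne_zero, Complex.I_ne_zero]
  have hz1 : z ≠ 1 := by
    intro h
    rw [hz, Complex.exp_eq_one_iff] at h
    obtain ⟨n, hn⟩ := h
    have h3 : (2 * (Real.pi:ℂ) * Complex.I) * ((j:ℂ)/d) = (2 * (Real.pi:ℂ) * Complex.I) * n := by
      linear_combination hn
    have h4 := mul_left_cancel₀ h2 h3
    have hjC : (j:ℂ) = n * d := by field_simp at h4; exact h4.trans (mul_comm _ _)
    have hjZ : j = n * d := by exact_mod_cast hjC
    have hn0 : n ≠ 0 := by rintro rfl; simp at hjZ; exact hj hjZ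
    have hna : j.natAbs = n.natAbs * d := by rw [hjZ, Int.natAbs_mul, Int.natAbs_natCast]
    have hn1 : 1 ≤ n.natAbs := Int.natAbs_pos.mpr hn0
    nlinarith [hjd, hna, hn1]
  have hzd : z ^ d = 1 := by
    rw [hz, ← Complex.exp_nat_mul]
    have : (d:ℂ) * (2 * (Real.pi:ℂ) * Complex.I * j / d) = j * (2 * Real.pi * Complex.I) := by
      field_simp
    rw [this]
    exact Complex.exp_int_mul_two_pi_mul_I j
  simp only [hrw]
  rw [geom_sum_eq hz1, hzd]
  simp

private lemma parseval' (d : ℕ) (c : ℕ → ℝ) :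
    ∑ s ∈ range d, ‖∑ k ∈ range d, (c k : ℂ) *
        Complex.exp (2 * (Real.pi:ℂ) * Complex.I * k * s / d)‖ ^ 2
      = d * ∑ k ∈ range d, (c k)^2 := by
  set F : ℕ → ℂ := fun s => ∑ k ∈ range d, (c k : ℂ) *
        Complex.exp (2 * (Real.pi:ℂ) * Complex.I * k * s / d) with hF
  have key : ∑ s ∈ range d, F s * (starRingEnd ℂ) (F s)
      = ((d * ∑ k ∈ range d, (c k)^2 : ℝ) : ℂ) := by
    have hconj : ∀ s : ℕ, (starRingEnd ℂ) (F s)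
        = ∑ l ∈ range d, (c l : ℂ) * Complex.exp (-(2 * (Real.pi:ℂ) * Complex.I * l * s / d)) := by
      intro s
      rw [hF]
      simp only [map_sum, map_mul, map_div₀, Complex.conj_I, Complex.conj_ofReal,
        map_ofNat, Complex.conj_natCast, ← Complex.exp_conj]
      congr 1
      ext l
      congr 2
      simp [map_div₀, map_mul, Complex.conj_I]
      ring
    calc ∑ s ∈ range d, F s * (starRingEnd ℂ) (F s)
        = ∑ s ∈ range d, ∑ k ∈ range d, ∑ l ∈ range d,
            (c k : ℂ) * c l * Complex.exp (2 * (Real.pi:ℂ) * Complex.I * ((k:ℤ) - (l:ℤ)) * s / d) := by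
          refine Finset.sum_congr rfl fun s _ => ?_
          rw [hconj, hF, Finset.sum_mul_sum]
          refine Finset.sum_congr rfl fun k _ => Finset.sum_congr rfl fun l _ => ?_
          rw [mul_mul_mul_comm, ← Complex.exp_add]
          congr 1
          push_cast
          ring
      _ = ∑ k ∈ range d, ∑ l ∈ range d,
            (c k : ℂ) * c l * ∑ s ∈ range d, Complex.exp (2 * (Real.pi:ℂ) * Complex.I * ((k:ℤ) - (l:ℤ)) * s / d) := by
          rw [Finset.sum_comm]
          refine Finset.sum_congr rfl fun k _ => ?_
          rw [Finset.sum_comm]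
          refine Finset.sum_congr rfl fun l _ => ?_
          rw [Finset.mul_sum]
      _ = ∑ k ∈ range d, ∑ l ∈ range d, (if l = k then ((c k : ℂ) * c l * d) else 0) := by
          refine Finset.sum_congr rfl fun k hk => Finset.sum_congr rfl fun l hl => ?_
          by_cases h : l = k
          · subst h
            simp
          · rw [if_neg h]
            have hcast : ∀ s:ℕ, 2 * (Real.pi:ℂ) * Complex.I * (((k:ℤ):ℂ) - ((l:ℤ):ℂ)) * s / d
                = 2 * (Real.pi:ℂ) * Complex.I * ((((k:ℤ) - (l:ℤ) : ℤ)):ℂ) * s / d :=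
              fun s => by push_cast; ring
            simp only [hcast]
            rw [orth' d ((k:ℤ) - l) (sub_ne_zero.mpr (by exact_mod_cast Ne.symm h))
              (by rw [mem_range] at hk hl; omega), mul_zero]
      _ = ((d * ∑ k ∈ range d, (c k)^2 : ℝ) : ℂ) := by
          push_cast
          rw [Finset.mul_sum]
          refine Finset.sum_congr rfl fun k hk => ?_
          rw [Finset.sum_ite_eq' (range d) k (fun l => (c k : ℂ) * c l * d)]
          rw [if_pos hk]
          ring
  have lhs_eq : ∑ s ∈ range d, F s * (starRingEnd ℂ) (F s)
      = ((∑ s ∈ range d, ‖F s‖ ^ 2 : ℝ) : ℂ) := by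
    rw [Complex.ofReal_sum]
    refine Finset.sum_congr rfl fun s _ => ?_
    rw [Complex.mul_conj]
    exact congrArg _ (Complex.sq_norm _).symm
  rw [lhs_eq] at key
  exact Complex.ofReal_inj.mp key

private lemma reindex' {M : Type*} [AddCommMonoid M] (d m : ℕ) (hd : 0 < d) (f : ℕ → M) :
    ∑ α ∈ range (d * m), f α = ∑ k ∈ range d, ∑ i ∈ range m, f (k + i * d) := by
  rw [← Finset.sum_product']
  refine (Finset.sum_nbij' (fun α => ((α % d, α / d) : ℕ × ℕ)) (fun p => p.1 + p.2 * d)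
    ?_ ?_ ?_ ?_ ?_).symm.symm
  · intro α hα
    rw [mem_range] at hα
    simp only [Finset.mem_product, mem_range]
    exact ⟨Nat.mod_lt _ hd, Nat.div_lt_of_lt_mul hα⟩
  · intro p hp
    simp only [Finset.mem_product, mem_range] at hp
    rw [mem_range]
    calc p.1 + p.2 * d < d + p.2 * d := by omega
      _ = (p.2 + 1) * d := by ring
      _ ≤ m * d := Nat.mul_le_mul_right d hp.2
      _ = d * m := mul_comm _ _
  · intro α hα
    simp [Nat.mod_add_div']
  · intro p hp
    simp only [Finset.mem_product, mem_range] at hp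
    simp [Nat.add_mul_mod_self_right, Nat.mod_eq_of_lt hp.1,
      Nat.add_mul_div_right _ _ hd, Nat.div_eq_of_lt hp.1]
  · intro α hα
    simp [Nat.mod_add_div']

private lemma psd_mult' (d m s : ℕ) (hd : 0 < d) (hm : 0 < m) (c : ℕ → ℝ) :
    PSD (d * m) c (s * m) = ‖∑ k ∈ range d,
      ((∑ i ∈ range m, c (k + i * d) : ℝ) : ℂ) *
        Complex.exp (2 * (Real.pi:ℂ) * Complex.I * k * s / d)‖ ^ 2 := by
  have hdC : (d:ℂ) ≠ 0 := Nat.cast_ne_zero.mpr hd.ne'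
  have hmC : (m:ℂ) ≠ 0 := Nat.cast_ne_zero.mpr hm.ne'
  unfold PSD
  congr 2
  rw [reindex' d m hd]
  refine Finset.sum_congr rfl fun k _ => ?_
  rw [Complex.ofReal_sum, Finset.sum_mul]
  refine Finset.sum_congr rfl fun i _ => ?_
  congr 1
  have hexp : 2 * (Real.pi : ℂ) * Complex.I * (↑(k + i * d)) * (↑(s * m)) / (↑(d * m))
      = 2 * (Real.pi:ℂ) * Complex.I * k * s / d + ((i * s : ℕ) : ℂ) * (2 * Real.pi * Complex.I) := by
    push_cast
    field_simp
  rw [hexp, Complex.exp_add,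
    show (((i * s : ℕ) : ℂ)) = (((i * s : ℕ) : ℤ) : ℂ) by push_cast; ring,
    Complex.exp_int_mul_two_pi_mul_I, mul_one]

private lemma psd_zero' (v : ℕ) (c : ℕ → ℝ) :
    PSD v c 0 = (∑ α ∈ range v, c α) ^ 2 := by
  unfold PSD
  have : ∀ α : ℕ, (c α : ℂ) * Complex.exp (2 * (Real.pi : ℂ) * Complex.I * α * (0:ℕ) / v)
      = (c α : ℂ) := by
    intro α
    norm_num
  rw [Finset.sum_congr rfl fun α _ => this α, ← Complex.ofReal_sum, Complex.norm_real, Real.norm_eq_abs,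
    _root_.sq_abs]

private lemma offdiag' (d : ℕ) (c : ℕ → ℝ) :
    2 * ∑ l ∈ range d, ∑ k ∈ range l, c k * c l
      = (∑ k ∈ range d, c k)^2 - ∑ k ∈ range d, (c k)^2 := by
  induction d with
  | zero => simp
  | succ n ih =>
    rw [sum_range_succ, sum_range_succ, sum_range_succ, ← Finset.sum_mul, mul_add, ih]
    ring

/-- Generalized constraint: `∑_{k<l} (A_k A_l + B_k B_l) = v - m`. -/
theorem stmt5 (v d m : ℕ) (hv : Odd v) (hv0 : 0 < v) (hdm : v = d * m)
    (a b : ℕ → ℝ)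
    (ha : ∀ i, a i = -1 ∨ a i = 1) (hb : ∀ i, b i = -1 ∨ b i = 1)
    (hpsd : ∀ s : ℕ, 1 ≤ s → s ≤ v - 1 → PSD v a s + PSD v b s = 2 * v - 2)
    (hpsd0 : PSD v a 0 + PSD v b 0 = 4 * v - 2) :
    ∑ l ∈ Finset.range d, ∑ k ∈ Finset.range l,
        ((∑ i ∈ Finset.range m, a (k + i * d)) * (∑ i ∈ Finset.range m, a (l + i * d))
          + (∑ i ∈ Finset.range m, b (k + i * d)) * (∑ i ∈ Finset.range m, b (l + i * d)))
      = (v : ℝ) - m := by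
  have hd : 0 < d := by
    rcases Nat.eq_zero_or_pos d with h | h
    · subst h; simp at hdm; omega
    · exact h
  have hm : 0 < m := by
    rcases Nat.eq_zero_or_pos m with h | h
    · subst h; simp at hdm; omega
    · exact h
  set A : ℕ → ℝ := fun k => ∑ i ∈ range m, a (k + i * d) with hA
  set B : ℕ → ℝ := fun k => ∑ i ∈ range m, b (k + i * d) with hB
  have hvR : (v:ℝ) = (d:ℝ) * m := by exact_mod_cast congrArg (Nat.cast : ℕ → ℝ) hdm
  have h1 : ∀ (c : ℕ → ℝ), ∑ s ∈ range d, PSD v c (s * m)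
      = d * ∑ k ∈ range d, (∑ i ∈ range m, c (k + i * d))^2 := by
    intro c
    calc ∑ s ∈ range d, PSD v c (s * m)
        = ∑ s ∈ range d, ‖∑ k ∈ range d,
            ((∑ i ∈ range m, c (k + i * d) : ℝ) : ℂ) *
            Complex.exp (2 * (Real.pi:ℂ) * Complex.I * k * s / d)‖ ^ 2 := by
          refine Finset.sum_congr rfl fun s _ => ?_
          rw [hdm]
          exact psd_mult' d m s hd hm c
      _ = d * ∑ k ∈ range d, (∑ i ∈ range m, c (k + i * d))^2 :=
          parseval' d (fun k => ∑ i ∈ range m, c (k + i * d))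
  -- Step 1: sum of PSDs at multiples of m
  have hsum : ∑ s ∈ range d, (PSD v a (s * m) + PSD v b (s * m))
      = d * (∑ k ∈ range d, (A k)^2 + ∑ k ∈ range d, (B k)^2) := by
    rw [Finset.sum_add_distrib, h1 a, h1 b, mul_add]
  -- Step 2: evaluate that sum using the PSD hypotheses
  have hval : ∑ s ∈ range d, (PSD v a (s * m) + PSD v b (s * m))
      = (4 * (v:ℝ) - 2) + ((d:ℝ) - 1) * (2 * v - 2) := by
    obtain ⟨e, he⟩ : ∃ e, d = e + 1 := ⟨d - 1, by omega⟩
    subst he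
    rw [Finset.sum_range_succ']
    have h0 : PSD v a (0 * m) + PSD v b (0 * m) = 4 * (v:ℝ) - 2 := by
      simpa using hpsd0
    rw [h0]
    have hstep : ∀ s ∈ range e, PSD v a ((s + 1) * m) + PSD v b ((s + 1) * m)
        = 2 * (v:ℝ) - 2 := by
      intro s hs
      rw [mem_range] at hs
      apply hpsd
      · exact Nat.mul_pos (by omega) hm
      · have hle : (s + 1) * m ≤ e * m := Nat.mul_le_mul_right m (by omega)
        have hv' : e * m + m = v := by rw [hdm]; ring
        omega
    rw [Finset.sum_congr rfl hstep, Finset.sum_const, card_range, nsmul_eq_mul]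
    push_cast
    ring
  -- Deduce the diagonal sum of squares
  have hQ : ∑ k ∈ range d, (A k)^2 + ∑ k ∈ range d, (B k)^2
      = 2 * (v:ℝ) + 2 * m - 2 := by
    have hdR : ((d:ℝ)) ≠ 0 := Nat.cast_ne_zero.mpr hd.ne'
    apply mul_left_cancel₀ hdR
    rw [← hsum, hval]
    linear_combination (2:ℝ) * hvR
  -- PSD at 0 gives the square of total sums
  have hSA : ∑ α ∈ range v, a α = ∑ k ∈ range d, A k := by
    rw [hdm]; exact reindex' d m hd a
  have hSB : ∑ α ∈ range v, b α = ∑ k ∈ range d, B k := by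
    rw [hdm]; exact reindex' d m hd b
  have h0sq : (∑ k ∈ range d, A k)^2 + (∑ k ∈ range d, B k)^2 = 4 * (v:ℝ) - 2 := by
    rw [← hSA, ← hSB, ← psd_zero' v a, ← psd_zero' v b]
    exact hpsd0
  have hoffA := offdiag' d A
  have hoffB := offdiag' d B
  have hgoal : ∑ l ∈ Finset.range d, ∑ k ∈ Finset.range l,
      (A k * A l + B k * B l) = (v : ℝ) - m := by
    have hsplit : ∑ l ∈ range d, ∑ k ∈ range l, (A k * A l + B k * B l)
        = (∑ l ∈ range d, ∑ k ∈ range l, A k * A l)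
          + ∑ l ∈ range d, ∑ k ∈ range l, B k * B l := by
      rw [← Finset.sum_add_distrib]
      exact Finset.sum_congr rfl fun l _ => Finset.sum_add_distrib
    rw [hsplit]
    linarith [hoffA, hoffB, h0sq, hQ]
  exact hgoal
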